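/- Let σ > 0, ξ ≠ 0, and let k be a non-negative integer. If Y has the exGPD(σ, ξ) distribution with density f(y) = (e^y/σ)(1 + ξ e^y/σ)^(−1/ξ − 1) on its support, then E[(log(1 + (ξ/σ) e^Y))^k] = ∫ (log(1 + ξ e^y/σ))^k f(y) dy = ξ^k · k!, the integral taken over the support. -/

import Mathlib

open MeasureTheory Real Set

/-- For `σ > 0`, `ξ ≠ 0` and a non-negative integer `k`, if `Y ~ exGPD(σ, ξ)` then
`E[(log(1 + (ξ/σ)e^Y))^k] = ξ^k · k!`. -/
theorem exGPD_property_b (σ ξ : ℝ) (hσ : 0 < σ) (hξ : ξ ≠ 0) (k : ℕ) :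
    ∫ y in (if ξ < 0 then Set.Iic (Real.log (-σ / ξ)) else Set.univ),
        (Real.log (1 + ξ * Real.exp y / σ)) ^ k *
          ((Real.exp y / σ) * (1 + ξ * Real.exp y / σ) ^ (-1 / ξ - 1)) =
      ξ ^ k * (Nat.factorial k : ℝ) := by
  set F : ℝ → ℝ := fun y => (Real.log (1 + ξ * Real.exp y / σ)) ^ k *
          ((Real.exp y / σ) * (1 + ξ * Real.exp y / σ) ^ (-1 / ξ - 1)) with hF
  set g : ℝ → ℝ := fun u => Real.log (σ * (Real.exp (ξ * u) - 1) / ξ) with hg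
  set g' : ℝ → ℝ := fun u => ξ * Real.exp (ξ * u) / (Real.exp (ξ * u) - 1) with hg'
  -- positivity of the inner expression on Ioi 0
  have hA : ∀ u ∈ Ioi (0:ℝ), 0 < σ * (Real.exp (ξ * u) - 1) / ξ := by
    intro u hu
    rcases hξ.lt_or_gt with h | h
    · have h1 : Real.exp (ξ * u) < 1 := by
        rw [Real.exp_lt_one_iff]; exact mul_neg_of_neg_of_pos h hu
      exact div_pos_of_neg_of_neg (mul_neg_of_pos_of_neg hσ (by linarith)) h
    · have h1 : 1 < Real.exp (ξ * u) := by
        rw [Real.one_lt_exp_iff]; exact mul_pos h hu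
      exact div_pos (mul_pos hσ (by linarith)) h
  have hE1ne : ∀ u ∈ Ioi (0:ℝ), Real.exp (ξ * u) - 1 ≠ 0 := by
    intro u hu h0
    have := hA u hu
    rw [h0, mul_zero, zero_div] at this
    exact lt_irrefl _ this
  -- key pointwise identities
  have hone : ∀ u ∈ Ioi (0:ℝ), 1 + ξ * Real.exp (g u) / σ = Real.exp (ξ * u) := by
    intro u hu
    have := Real.exp_log (hA u hu)
    rw [hg]; simp only []
    rw [this]; field_simp; ring
  -- derivative
  have hderiv : ∀ u ∈ Ioi (0:ℝ), HasDerivWithinAt g (g' u) (Ioi 0) u := by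
    intro u hu
    have h1 : HasDerivAt (fun u : ℝ => ξ * u) ξ u := by
      simpa using (hasDerivAt_id u).const_mul ξ
    have h2 : HasDerivAt (fun u : ℝ => Real.exp (ξ * u)) (Real.exp (ξ * u) * ξ) u :=
      (Real.hasDerivAt_exp (ξ * u)).comp u h1
    have h3 : HasDerivAt (fun u : ℝ => σ * (Real.exp (ξ * u) - 1) / ξ)
        (σ * (Real.exp (ξ * u) * ξ) / ξ) u := ((h2.sub_const 1).const_mul σ).div_const ξ
    have h4 := h3.log (hA u hu).ne'
    have : σ * (Real.exp (ξ * u) * ξ) / ξ / (σ * (Real.exp (ξ * u) - 1) / ξ) = g' u := by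
      rw [hg']
      field_simp [hE1ne u hu]
    rw [← this]
    exact h4.hasDerivWithinAt
  -- injectivity
  have hinj : InjOn g (Ioi 0) := by
    intro u1 h1 u2 h2 heq
    have e1 : Real.exp (g u1) = Real.exp (g u2) := by rw [heq]
    rw [Real.exp_log (hA u1 h1), Real.exp_log (hA u2 h2)] at e1
    have e2 : Real.exp (ξ * u1) = Real.exp (ξ * u2) := by
      have h' : σ * (Real.exp (ξ * u1) - 1) = σ * (Real.exp (ξ * u2) - 1) := by
        have hc := congrArg (· * ξ) e1
        simpa [div_mul_cancel₀, hξ] using hc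
      have h'' := mul_left_cancel₀ hσ.ne' h'
      linarith
    have := Real.exp_injective e2
    exact mul_left_cancel₀ hξ this
  -- image
  have himg : g '' Ioi 0 = (if ξ < 0 then Iio (Real.log (-σ / ξ)) else univ) := by
    ext y
    constructor
    · rintro ⟨u, hu, rfl⟩
      split_ifs with h
      · have hE1 : Real.exp (ξ * u) < 1 := by
          rw [Real.exp_lt_one_iff]; exact mul_neg_of_neg_of_pos h hu
        have hlt : σ * (Real.exp (ξ * u) - 1) / ξ < -σ / ξ := by
          have hdiff : -σ / ξ - σ * (Real.exp (ξ * u) - 1) / ξ = -(σ * Real.exp (ξ * u)) / ξ := by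
            field_simp; ring
          have : 0 < -(σ * Real.exp (ξ * u)) / ξ :=
            div_pos_of_neg_of_neg (by nlinarith [Real.exp_pos (ξ * u)]) h
          linarith [hdiff ▸ this]
        exact Real.log_lt_log (hA u hu) hlt
      · trivial
    · intro hy
      by_cases h : ξ < 0
      · rw [if_pos h] at hy
        have hσξ : 0 < -σ / ξ := div_pos_of_neg_of_neg (by linarith) h
        have hey : Real.exp y < -σ / ξ := by
          have := Real.exp_lt_exp.mpr hy
          rwa [Real.exp_log hσξ] at this
        have h1' : -σ < ξ * Real.exp y := by
          have := mul_lt_mul_of_neg_left hey h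
          rwa [show ξ * (-σ / ξ) = -σ by field_simp] at this
        have hb1 : -1 < ξ * Real.exp y / σ := by
          rw [lt_div_iff₀ hσ]; linarith
        have hb2 : ξ * Real.exp y / σ < 0 :=
          div_neg_of_neg_of_pos (mul_neg_of_neg_of_pos h (Real.exp_pos y)) hσ
        have hpos : 0 < 1 + ξ * Real.exp y / σ := by linarith
        have hlt1 : 1 + ξ * Real.exp y / σ < 1 := by linarith
        refine ⟨Real.log (1 + ξ * Real.exp y / σ) / ξ, ?_, ?_⟩
        · exact div_pos_of_neg_of_neg (Real.log_neg hpos hlt1) h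
        · rw [hg]; simp only []
          rw [mul_div_cancel₀ _ hξ, Real.exp_log hpos]
          have : σ * (1 + ξ * Real.exp y / σ - 1) / ξ = Real.exp y := by
            field_simp
            ring
          rw [this, Real.log_exp]
      · have hξp : 0 < ξ := lt_of_le_of_ne (not_lt.mp h) (Ne.symm hξ)
        have hb : 0 < ξ * Real.exp y / σ := by positivity
        have hpos : 0 < 1 + ξ * Real.exp y / σ := by linarith
        refine ⟨Real.log (1 + ξ * Real.exp y / σ) / ξ, ?_, ?_⟩
        · exact div_pos (Real.log_pos (by linarith)) hξp
        · rw [hg]; simp only []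
          rw [mul_div_cancel₀ _ hξ, Real.exp_log hpos]
          have : σ * (1 + ξ * Real.exp y / σ - 1) / ξ = Real.exp y := by
            field_simp
            ring
          rw [this, Real.log_exp]
  -- change of variables
  have key : ∫ y in g '' Ioi 0, F y = ∫ u in Ioi 0, |g' u| • F (g u) :=
    integral_image_eq_integral_abs_deriv_smul measurableSet_Ioi hderiv hinj F
  -- pointwise simplification of the transformed integrand
  have hpt : ∀ u ∈ Ioi (0:ℝ), |g' u| • F (g u) = ξ ^ k * (u ^ k * Real.exp (-u)) := by
    intro u hu
    have hE := Real.exp_pos (ξ * u)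
    have hEne := hE1ne u hu
    have h1 := hone u hu
    have hgpos : 0 < g' u := by
      rw [hg']
      rcases hξ.lt_or_gt with h | h
      · have : Real.exp (ξ * u) < 1 := by
          rw [Real.exp_lt_one_iff]; exact mul_neg_of_neg_of_pos h hu
        exact div_pos_of_neg_of_neg (mul_neg_of_neg_of_pos h hE) (by linarith)
      · have : 1 < Real.exp (ξ * u) := by
          rw [Real.one_lt_exp_iff]; exact mul_pos h hu
        exact div_pos (mul_pos h hE) (by linarith)
    have hexpg : Real.exp (g u) = σ * (Real.exp (ξ * u) - 1) / ξ := Real.exp_log (hA u hu)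
    have hlog : Real.log (1 + ξ * Real.exp (g u) / σ) = ξ * u := by
      rw [h1, Real.log_exp]
    have hrpow : (1 + ξ * Real.exp (g u) / σ) ^ (-1 / ξ - 1) = Real.exp (-u - ξ * u) := by
      rw [h1, Real.rpow_def_of_pos hE, Real.log_exp]
      congr 1
      field_simp
    rw [abs_of_pos hgpos, smul_eq_mul, hF]
    simp only []
    rw [hlog, hrpow, hexpg, hg']
    rw [mul_pow]
    have hsplit : Real.exp (-u - ξ * u) = Real.exp (-u) / Real.exp (ξ * u) := by
      rw [eq_div_iff hE.ne', ← Real.exp_add]; ring_nf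
    rw [hsplit]
    field_simp
  have hint : ∫ u in Ioi (0:ℝ), |g' u| • F (g u)
      = ∫ u in Ioi (0:ℝ), ξ ^ k * (u ^ k * Real.exp (-u)) :=
    setIntegral_congr_fun measurableSet_Ioi hpt
  -- the Gamma integral
  have hGamma : ∫ u in Ioi (0:ℝ), u ^ k * Real.exp (-u) = (Nat.factorial k : ℝ) := by
    have h := Real.Gamma_eq_integral (show (0:ℝ) < (k:ℝ) + 1 by positivity)
    have h2 : Real.Gamma ((k:ℝ) + 1) = (Nat.factorial k : ℝ) := Real.Gamma_nat_eq_factorial k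
    rw [h2] at h
    rw [h]
    refine setIntegral_congr_fun measurableSet_Ioi ?_
    intro x hx
    show x ^ k * Real.exp (-x) = Real.exp (-x) * x ^ ((k:ℝ) + 1 - 1)
    rw [show (k:ℝ) + 1 - 1 = (k:ℝ) by ring, Real.rpow_natCast]
    ring
  -- assemble
  have lhs_eq : ∫ y in (if ξ < 0 then Set.Iic (Real.log (-σ / ξ)) else Set.univ), F y
      = ∫ y in g '' Ioi 0, F y := by
    rw [himg]
    split_ifs with h
    · exact (setIntegral_congr_set Iio_ae_eq_Iic).symm
    · rfl
  rw [show (∫ y in (if ξ < 0 then Set.Iic (Real.log (-σ / ξ)) else Set.univ),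
        (Real.log (1 + ξ * Real.exp y / σ)) ^ k *
          ((Real.exp y / σ) * (1 + ξ * Real.exp y / σ) ^ (-1 / ξ - 1)))
      = ∫ y in (if ξ < 0 then Set.Iic (Real.log (-σ / ξ)) else Set.univ), F y from rfl]
  rw [lhs_eq, key, hint, integral_const_mul, hGamma]
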